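/- Let w be a standard monomial of length n ≥ 0 (of either type), with weight Z₁ and superweight Z₂ as defined above. Then the point (Z₁, Z₂) satisfies -½·log₂(Z₁) - 5/2 < Z₂ < ½·log₂(Z₁) + 2. -/

import Mathlib

open Finset

lemma card_even_range (m : ℕ) :
    ((Finset.range m).filter (fun i => Even i)).card = (m + 1) / 2 := by
  induction m with
  | zero => simp
  | succ m ih =>
    rw [Finset.range_add_one, Finset.filter_insert]
    by_cases hm : Even m
    · rw [if_pos hm, Finset.card_insert_of_notMem (by simp), ih]
      obtain ⟨k, hk⟩ := hm; omega
    · rw [if_neg hm, ih]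
      rw [Nat.not_even_iff_odd] at hm
      obtain ⟨k, hk⟩ := hm; omega

lemma sum_neg_one_bounds {m : ℕ} {S : Finset ℕ} (hS : S ⊆ Finset.range m) :
    -((m : ℝ) / 2) ≤ ∑ i ∈ S, (-1 : ℝ) ^ i ∧
      ∑ i ∈ S, (-1 : ℝ) ^ i ≤ (m + 1 : ℝ) / 2 := by
  have hsplit := Finset.sum_filter_add_sum_filter_not S (fun i => Even i)
      (fun i => (-1 : ℝ) ^ i)
  have he : ∑ i ∈ S.filter (fun i => Even i), (-1 : ℝ) ^ i
      = (S.filter (fun i => Even i)).card := by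
    rw [Finset.card_eq_sum_ones]
    push_cast
    exact Finset.sum_congr rfl fun i hi => by
      have := (Finset.mem_filter.mp hi).2; exact Even.neg_one_pow this
  have ho : ∑ i ∈ S.filter (fun i => ¬ Even i), (-1 : ℝ) ^ i
      = -((S.filter (fun i => ¬ Even i)).card) := by
    rw [Finset.card_eq_sum_ones]
    push_cast
    rw [← Finset.sum_neg_distrib]
    exact Finset.sum_congr rfl fun i hi => by
      have := (Finset.mem_filter.mp hi).2
      rw [Nat.not_even_iff_odd] at this
      simpa using Odd.neg_one_pow this
  have hce : (S.filter (fun i => Even i)).card ≤ (m + 1) / 2 := by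
    rw [← card_even_range m]
    exact Finset.card_le_card (Finset.filter_subset_filter _ hS)
  have hco : (S.filter (fun i => ¬ Even i)).card ≤ m / 2 := by
    have h1 : (S.filter (fun i => ¬ Even i)).card
        ≤ ((Finset.range m).filter (fun i => ¬ Even i)).card :=
      Finset.card_le_card (Finset.filter_subset_filter _ hS)
    have h2 := Finset.card_filter_add_card_filter_not
        (s := Finset.range m) (p := fun i => Even i)
    rw [Finset.card_range, card_even_range] at h2
    omega
  constructor
  · rw [← hsplit, he, ho]
    have : ((S.filter (fun i => ¬ Even i)).card : ℝ) ≤ (m : ℝ) / 2 := by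
      have : ((S.filter (fun i => ¬ Even i)).card : ℝ) ≤ ((m / 2 : ℕ) : ℝ) := by
        exact_mod_cast hco
      have h3 : ((m / 2 : ℕ) : ℝ) ≤ (m : ℝ) / 2 := by
        rw [le_div_iff₀ (by norm_num)]
        exact_mod_cast Nat.div_mul_le_self m 2
      linarith
    have hE : (0 : ℝ) ≤ (S.filter (fun i => Even i)).card := by positivity
    linarith
  · rw [← hsplit, he, ho]
    have : ((S.filter (fun i => Even i)).card : ℝ) ≤ ((m : ℝ) + 1) / 2 := by
      have h1 : ((S.filter (fun i => Even i)).card : ℝ) ≤ (((m + 1) / 2 : ℕ) : ℝ) := by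
        exact_mod_cast hce
      have h3 : (((m + 1) / 2 : ℕ) : ℝ) ≤ ((m : ℝ) + 1) / 2 := by
        rw [le_div_iff₀ (by norm_num)]
        exact_mod_cast Nat.div_mul_le_self (m + 1) 2
      linarith
    have hO : (0 : ℝ) ≤ (S.filter (fun i => ¬ Even i)).card := by positivity
    linarith

lemma sum_two_pow_le {m : ℕ} {S : Finset ℕ} (hS : S ⊆ Finset.range m) :
    ∑ i ∈ S, (2 : ℝ) ^ i ≤ 2 ^ m - 1 := by
  have h1 : ∑ i ∈ S, (2 : ℝ) ^ i ≤ ∑ i ∈ Finset.range m, (2 : ℝ) ^ i :=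
    Finset.sum_le_sum_of_subset_of_nonneg hS (fun i _ _ => by positivity)
  have h2 : ∑ i ∈ Finset.range m, (2 : ℝ) ^ i = 2 ^ m - 1 := by
    rw [geom_sum_eq (by norm_num : (2:ℝ) ≠ 1)]
    ring
  linarith

theorem stmt_8 (n : ℕ) (S : Finset ℕ) (Z₁ Z₂ : ℝ)
    (h : (S ⊆ Finset.range (n - 1) ∧
            Z₁ = 2 ^ n - ∑ i ∈ S, (2 : ℝ) ^ i ∧
            Z₂ = (-1 : ℝ) ^ n - ∑ i ∈ S, (-1 : ℝ) ^ i) ∨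
         (2 ≤ n ∧ S ⊆ Finset.range (n - 2) ∧
            Z₁ = 2 ^ (n - 1) - ∑ i ∈ S, (2 : ℝ) ^ i ∧
            Z₂ = (-1 : ℝ) ^ n - (-1 : ℝ) ^ (n - 1) - ∑ i ∈ S, (-1 : ℝ) ^ i)) :
    -(1 / 2) * Real.logb 2 Z₁ - 5 / 2 < Z₂ ∧ Z₂ < (1 / 2) * Real.logb 2 Z₁ + 2 := by
  rcases h with ⟨hS, hZ1, hZ2⟩ | ⟨hn, hS, hZ1, hZ2⟩
  · -- first type
    -- Z₁ > 2 ^ ((n:ℝ) - 1)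
    have hZ1lb : (2 : ℝ) ^ ((n : ℝ) - 1) < Z₁ := by
      have hsum := sum_two_pow_le hS
      rcases Nat.eq_zero_or_pos n with h0 | hpos
      · subst h0
        simp only [Nat.zero_sub, Finset.range_zero, Finset.subset_empty] at hS
        subst hS
        simp only [Finset.sum_empty] at hZ1
        rw [hZ1]
        rw [show ((0:ℕ):ℝ) - 1 = -1 by norm_num, Real.rpow_neg_one]
        norm_num
      · have hn1 : ((n - 1 : ℕ) : ℝ) = (n : ℝ) - 1 := by
          push_cast [Nat.cast_sub hpos]; ring
        have hpow : (2 : ℝ) ^ ((n : ℝ) - 1) = (2 : ℝ) ^ (n - 1 : ℕ) := by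
          rw [← hn1, Real.rpow_natCast]
        rw [hpow]
        have h2n : (2 : ℝ) ^ n = 2 * 2 ^ (n - 1 : ℕ) := by
          rw [← pow_succ']
          congr 1
          omega
        rw [hZ1, h2n]
        linarith
    have hZ1pos : 0 < Z₁ := lt_trans (by positivity) hZ1lb
    have hlog : (n : ℝ) - 1 < Real.logb 2 Z₁ := by
      have := Real.logb_lt_logb (by norm_num : (1:ℝ) < 2) (by positivity) hZ1lb
      rwa [Real.logb_rpow (by norm_num) (by norm_num)] at this
    have hb := sum_neg_one_bounds hS
    have hm : ((n - 1 : ℕ) : ℝ) ≤ (n : ℝ) := by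
      exact_mod_cast Nat.cast_le.mpr (Nat.sub_le n 1)
    have hpow1 : (-1 : ℝ) ^ n = 1 ∨ (-1 : ℝ) ^ n = -1 := by
      rcases Nat.even_or_odd n with he | ho
      · exact Or.inl he.neg_one_pow
      · exact Or.inr ho.neg_one_pow
    have hZ2ub : Z₂ ≤ (n : ℝ) / 2 + 1 := by
      rw [hZ2]
      rcases hpow1 with h1 | h1 <;> rw [h1] <;> nlinarith [hb.1, hb.2]
    have hZ2lb : -((n : ℝ) / 2 + 3 / 2) ≤ Z₂ := by
      rw [hZ2]
      rcases hpow1 with h1 | h1 <;> rw [h1] <;> nlinarith [hb.1, hb.2]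
    constructor <;> nlinarith [hlog]
  · -- second type
    have hZ1lb : (2 : ℝ) ^ ((n : ℝ) - 2) < Z₁ := by
      have hsum := sum_two_pow_le hS
      have hn2 : ((n - 2 : ℕ) : ℝ) = (n : ℝ) - 2 := by
        push_cast [Nat.cast_sub hn]; ring
      have hpow : (2 : ℝ) ^ ((n : ℝ) - 2) = (2 : ℝ) ^ (n - 2 : ℕ) := by
        rw [← hn2, Real.rpow_natCast]
      rw [hpow]
      have h2n : (2 : ℝ) ^ (n - 1 : ℕ) = 2 * 2 ^ (n - 2 : ℕ) := by
        rw [← pow_succ']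
        congr 1
        omega
      rw [hZ1, h2n]
      linarith
    have hZ1pos : 0 < Z₁ := lt_trans (by positivity) hZ1lb
    have hlog : (n : ℝ) - 2 < Real.logb 2 Z₁ := by
      have := Real.logb_lt_logb (by norm_num : (1:ℝ) < 2) (by positivity) hZ1lb
      rwa [Real.logb_rpow (by norm_num) (by norm_num)] at this
    have hb := sum_neg_one_bounds hS
    have hn2 : ((n - 2 : ℕ) : ℝ) = (n : ℝ) - 2 := by
      push_cast [Nat.cast_sub hn]; ring
    rw [hn2] at hb
    have hpp : (-1 : ℝ) ^ n - (-1 : ℝ) ^ (n - 1) = 2 ∨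
        (-1 : ℝ) ^ n - (-1 : ℝ) ^ (n - 1) = -2 := by
      have hn1 : (-1 : ℝ) ^ (n - 1) * (-1) = (-1 : ℝ) ^ n := by
        rw [← pow_succ]
        congr 1
        omega
      rcases Nat.even_or_odd n with he | ho
      · left
        rw [he.neg_one_pow]
        have : (-1 : ℝ) ^ (n - 1) = -1 := by
          rw [he.neg_one_pow] at hn1; linarith
        rw [this]; ring
      · right
        rw [ho.neg_one_pow]
        have : (-1 : ℝ) ^ (n - 1) = 1 := by
          rw [ho.neg_one_pow] at hn1; linarith
        rw [this]; ring
    have hZ2ub : Z₂ ≤ ((n : ℝ) - 2) / 2 + 2 := by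
      rw [hZ2]
      rcases hpp with h1 | h1 <;> rw [h1] <;> nlinarith [hb.1, hb.2]
    have hZ2lb : -(((n : ℝ) - 2) / 2 + 5 / 2) ≤ Z₂ := by
      rw [hZ2]
      rcases hpp with h1 | h1 <;> rw [h1] <;> nlinarith [hb.1, hb.2]
    constructor <;> nlinarith [hlog]
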